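/- Suppose N : V → V' satisfies Assumption (N) with data (C_N, n, (ζ₁ⱼ), (ζ₂ⱼ), (δ₁ⱼ), (δ₂ⱼ)) and N(0) = 0. Then there exists p > 0 such that for every γ > 0 there exists a constant C ≥ 0 (depending only on γ⁻¹, C_N, n and the exponents) with: 2·⟨N(y), y⟩ ≤ γ·‖y‖_V² + C·(1 + ‖y‖_H^{p})·‖y‖_H² for all y ∈ V. (Lemma 3.5 of the paper.) -/

import Mathlib

open scoped RealInnerProductSpace

/-- Young-type absorption: `M a^α b^θ ≤ ε b² + C a^{2α/(2-θ)}`. -/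
lemma young_aux (ε M α θ : ℝ) (hε : 0 < ε) (hM : 0 ≤ M) (hα : 0 ≤ α)
    (hθ : 0 ≤ θ) (hθ2 : θ < 2) :
    ∃ C : ℝ, 0 ≤ C ∧ ∀ a b : ℝ, 0 ≤ a → 0 ≤ b →
      M * (a ^ α * b ^ θ) ≤ ε * b ^ (2:ℝ) + C * a ^ (2 * α / (2 - θ)) := by
  have h2θ : 0 < 2 - θ := by linarith
  refine ⟨M * (M / ε) ^ (θ / (2 - θ)), by positivity, fun a b ha hb => ?_⟩
  by_cases h : ε * b ^ (2 - θ) ≤ M * a ^ α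
  · have hbb : b ^ (2 - θ) ≤ (M / ε) * a ^ α := by
      rw [div_mul_eq_mul_div, le_div_iff₀ hε]
      linarith
    have hr : 0 ≤ θ / (2 - θ) := by positivity
    have hbθ : b ^ θ ≤ ((M / ε) * a ^ α) ^ (θ / (2 - θ)) := by
      have h1 := Real.rpow_le_rpow (Real.rpow_nonneg hb _) hbb hr
      rw [← Real.rpow_mul hb] at h1
      have he : (2 - θ) * (θ / (2 - θ)) = θ := by field_simp
      rwa [he] at h1
    have step1 : M * (a ^ α * b ^ θ)
        ≤ M * (a ^ α * ((M / ε) * a ^ α) ^ (θ / (2 - θ))) := by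
      have := mul_le_mul_of_nonneg_left hbθ (Real.rpow_nonneg ha α)
      exact mul_le_mul_of_nonneg_left this hM
    have step2 : M * (a ^ α * ((M / ε) * a ^ α) ^ (θ / (2 - θ)))
        = M * (M / ε) ^ (θ / (2 - θ)) * a ^ (2 * α / (2 - θ)) := by
      rw [Real.mul_rpow (by positivity) (Real.rpow_nonneg ha α),
        ← Real.rpow_mul ha,
        show 2 * α / (2 - θ) = α + α * (θ / (2 - θ)) by field_simp; ring,
        Real.rpow_add_of_nonneg ha hα (by positivity)]
      ring
    have hb2 : (0:ℝ) ≤ ε * b ^ (2:ℝ) := by positivity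
    calc M * (a ^ α * b ^ θ)
        ≤ M * (M / ε) ^ (θ / (2 - θ)) * a ^ (2 * α / (2 - θ)) := by
          rw [← step2]; exact step1
      _ ≤ ε * b ^ (2:ℝ) + M * (M / ε) ^ (θ / (2 - θ)) * a ^ (2 * α / (2 - θ)) := by
          linarith
  · push_neg at h
    have h3 : (0:ℝ) ≤ M * (M / ε) ^ (θ / (2 - θ)) * a ^ (2 * α / (2 - θ)) := by
      positivity
    have h4 : M * (a ^ α * b ^ θ) ≤ ε * b ^ (2:ℝ) := by
      calc M * (a ^ α * b ^ θ) = (M * a ^ α) * b ^ θ := by ring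
        _ ≤ (ε * b ^ (2 - θ)) * b ^ θ :=
            mul_le_mul_of_nonneg_right h.le (Real.rpow_nonneg hb θ)
        _ = ε * b ^ (2:ℝ) := by
            rw [mul_assoc, ← Real.rpow_add_of_nonneg hb (by linarith) hθ]
            norm_num
    linarith

/-- Absorb a power `a^q` with `2 ≤ q ≤ p+2` into `(1+a^p) a²`. -/
lemma absorb_aux (p q a : ℝ) (hq : 2 ≤ q) (hpq : q ≤ p + 2) (ha : 0 ≤ a) :
    a ^ q ≤ (1 + a ^ p) * a ^ (2:ℝ) := by
  have hq2 : 0 ≤ q - 2 := by linarith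
  have hsplit : a ^ q = a ^ (q - 2) * a ^ (2:ℝ) := by
    rw [← Real.rpow_add_of_nonneg ha hq2 (by norm_num)]
    norm_num
  rw [hsplit]
  have hfac : a ^ (q - 2) ≤ 1 + a ^ p := by
    rcases le_total a 1 with h1 | h1
    · have := Real.rpow_le_one ha h1 hq2
      have hp0 : (0:ℝ) ≤ a ^ p := Real.rpow_nonneg ha p
      linarith
    · have := Real.rpow_le_rpow_of_exponent_le h1 (by linarith : q - 2 ≤ p)
      have : a ^ (q - 2) ≤ a ^ p := this
      linarith
  exact mul_le_mul_of_nonneg_right hfac (Real.rpow_nonneg ha 2)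

/-- Lemma 3.5: one-sided estimate `2⟨N(y), y⟩ ≤ γ‖y‖_V² + C(1+‖y‖_H^p)‖y‖_H²`. -/
theorem stmt2
    {H V : Type*}
    [NormedAddCommGroup H] [InnerProductSpace ℝ H] [CompleteSpace H]
    [NormedAddCommGroup V] [InnerProductSpace ℝ V] [CompleteSpace V]
    (ι : V →L[ℝ] H) (hι : Function.Injective ι) (hdense : DenseRange ι)
    (N : V → (V →L[ℝ] ℝ))
    (CN : ℝ) (hCN : 0 ≤ CN) (n : ℕ) (hn : 1 ≤ n)
    (ζ₁ ζ₂ δ₁ δ₂ : Fin n → ℝ)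
    (hζ₁ : ∀ k, 0 ≤ ζ₁ k) (hζ₂ : ∀ k, 0 ≤ ζ₂ k)
    (hδ₁ : ∀ k, 0 ≤ δ₁ k) (hδ₂ : ∀ k, 0 ≤ δ₂ k)
    (hlt : ∀ k, ζ₂ k + δ₂ k < 1) (hge : ∀ k, 1 ≤ δ₁ k + δ₂ k)
    (hN : ∀ y₁ y₂ : V,
      ‖N y₁ - N y₂‖ ≤ CN * ∑ k : Fin n,
        (‖ι y₁‖ ^ ζ₁ k * ‖y₁‖ ^ ζ₂ k + ‖ι y₂‖ ^ ζ₁ k * ‖y₂‖ ^ ζ₂ k) *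
          (‖ι (y₁ - y₂)‖ ^ δ₁ k * ‖y₁ - y₂‖ ^ δ₂ k))
    (hN0 : N 0 = 0) :
    ∃ p : ℝ, 0 < p ∧ ∀ γ : ℝ, 0 < γ → ∃ C : ℝ, 0 ≤ C ∧ ∀ y : V,
      2 * (N y) y ≤ γ * ‖y‖ ^ 2 + C * (1 + ‖ι y‖ ^ p) * ‖ι y‖ ^ 2 := by
  -- exponents produced by the Young-type estimates
  set q1 : Fin n → ℝ := fun k => 2 * (ζ₁ k + δ₁ k) / (2 - (ζ₂ k + δ₂ k + 1)) with hq1def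
  set q2 : Fin n → ℝ := fun k => 2 * (δ₁ k) / (2 - (δ₂ k + 1)) with hq2def
  have hd1 : ∀ k, 0 < 2 - (ζ₂ k + δ₂ k + 1) := fun k => by have := hlt k; linarith
  have hd2 : ∀ k, 0 < 2 - (δ₂ k + 1) := fun k => by
    have := hlt k; have := hζ₂ k; linarith
  have hq1nn : ∀ k, 0 ≤ q1 k := fun k => by
    have := hζ₁ k; have := hδ₁ k
    exact div_nonneg (by linarith) (hd1 k).le
  have hq2nn : ∀ k, 0 ≤ q2 k := fun k => by
    have := hδ₁ k
    exact div_nonneg (by linarith) (hd2 k).le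
  have hq1two : ∀ k, 2 ≤ q1 k := fun k => by
    rw [hq1def, le_div_iff₀ (hd1 k)]
    have := hge k; have := hζ₁ k; have := hζ₂ k; linarith
  have hq2two : ∀ k, 2 ≤ q2 k := fun k => by
    rw [hq2def, le_div_iff₀ (hd2 k)]
    have := hge k; linarith
  set p : ℝ := 1 + ∑ k : Fin n, (q1 k + q2 k) with hpdef
  have hsumnn : (0:ℝ) ≤ ∑ k : Fin n, (q1 k + q2 k) :=
    Finset.sum_nonneg fun k _ => add_nonneg (hq1nn k) (hq2nn k)
  have hple : ∀ k, q1 k ≤ p + 2 ∧ q2 k ≤ p + 2 := fun k => by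
    have hk : q1 k + q2 k ≤ ∑ i : Fin n, (q1 i + q2 i) := Finset.single_le_sum
      (f := fun k => q1 k + q2 k)
      (fun i _ => add_nonneg (hq1nn i) (hq2nn i)) (Finset.mem_univ k)
    constructor
    · have := hq2nn k; rw [hpdef]; linarith
    · have := hq1nn k; rw [hpdef]; linarith
  refine ⟨p, by rw [hpdef]; linarith, fun γ hγ => ?_⟩
  have hn0 : (0:ℝ) < (n:ℝ) := by exact_mod_cast hn.trans_lt' (by norm_num)
  set ε : ℝ := γ / (4 * n) with hεdef
  have hε : 0 < ε := by rw [hεdef]; positivity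
  choose C1 hC1 hC1' using fun k =>
    young_aux ε (2 * CN) (ζ₁ k + δ₁ k) (ζ₂ k + δ₂ k + 1) hε (by linarith)
      (add_nonneg (hζ₁ k) (hδ₁ k)) (by have := hζ₂ k; have := hδ₂ k; linarith)
      (by have := hlt k; linarith)
  choose C2 hC2 hC2' using fun k =>
    young_aux ε (2 * CN) (δ₁ k) (δ₂ k + 1) hε (by linarith) (hδ₁ k)
      (by have := hδ₂ k; linarith) (by have := hlt k; have := hζ₂ k; linarith)
  refine ⟨∑ k : Fin n, (C1 k + C2 k),
    Finset.sum_nonneg fun k _ => add_nonneg (hC1 k) (hC2 k), fun y => ?_⟩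
  set a : ℝ := ‖ι y‖ with hadef
  set b : ℝ := ‖y‖ with hbdef
  have ha : 0 ≤ a := norm_nonneg _
  have hb : 0 ≤ b := norm_nonneg _
  set A : ℝ := (1 + a ^ p) * a ^ (2:ℝ) with hAdef
  -- Step 2: bound ‖N y‖
  have key : ‖N y‖ ≤ CN * ∑ k : Fin n,
      ((a ^ ζ₁ k * b ^ ζ₂ k + 1) * (a ^ δ₁ k * b ^ δ₂ k)) := by
    have h := hN y 0
    simp only [hN0, sub_zero, map_zero, norm_zero] at h
    refine h.trans (mul_le_mul_of_nonneg_left (Finset.sum_le_sum fun k _ => ?_) hCN)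
    have hz1 : (0:ℝ) ^ ζ₁ k ≤ 1 := Real.rpow_le_one le_rfl zero_le_one (hζ₁ k)
    have hz2 : (0:ℝ) ^ ζ₂ k ≤ 1 := Real.rpow_le_one le_rfl zero_le_one (hζ₂ k)
    have hz1n : (0:ℝ) ≤ (0:ℝ) ^ ζ₁ k := Real.rpow_nonneg le_rfl _
    have hz : (0:ℝ) ^ ζ₁ k * (0:ℝ) ^ ζ₂ k ≤ 1 := by nlinarith
    have hw : (0:ℝ) ≤ a ^ δ₁ k * b ^ δ₂ k := by positivity
    have := mul_le_mul_of_nonneg_right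
      (add_le_add_right hz (a ^ ζ₁ k * b ^ ζ₂ k)) hw
    exact this
  -- main calc
  have hexp : ∀ k : Fin n,
      2 * (CN * ((a ^ ζ₁ k * b ^ ζ₂ k + 1) * (a ^ δ₁ k * b ^ δ₂ k)) * b)
      = 2 * CN * (a ^ (ζ₁ k + δ₁ k) * b ^ (ζ₂ k + δ₂ k + 1))
        + 2 * CN * (a ^ δ₁ k * b ^ (δ₂ k + 1)) := by
    intro k
    rw [Real.rpow_add_of_nonneg ha (hζ₁ k) (hδ₁ k),
      Real.rpow_add_of_nonneg hb (add_nonneg (hζ₂ k) (hδ₂ k)) zero_le_one,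
      Real.rpow_add_of_nonneg hb (hζ₂ k) (hδ₂ k),
      Real.rpow_add_of_nonneg hb (hδ₂ k) zero_le_one,
      Real.rpow_one]
    ring
  have hb2eq : b ^ (2:ℝ) = b ^ (2:ℕ) := by
    rw [← Real.rpow_natCast b 2]; norm_num
  have ha2eq : a ^ (2:ℝ) = a ^ (2:ℕ) := by
    rw [← Real.rpow_natCast a 2]; norm_num
  have main : 2 * (N y) y
      ≤ (n:ℝ) * (2 * (ε * b ^ (2:ℝ))) + (∑ k : Fin n, (C1 k + C2 k)) * A := by
    calc 2 * (N y) y ≤ 2 * (‖N y‖ * b) := by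
          have h1 : (N y) y ≤ ‖N y‖ * b := by
            have := (N y).le_opNorm y
            have h2 : (N y) y ≤ ‖(N y) y‖ := le_abs_self _
            rw [hbdef]; exact h2.trans this
          linarith
      _ ≤ 2 * ((CN * ∑ k : Fin n,
            ((a ^ ζ₁ k * b ^ ζ₂ k + 1) * (a ^ δ₁ k * b ^ δ₂ k))) * b) := by
          have := mul_le_mul_of_nonneg_right key hb
          linarith
      _ = ∑ k : Fin n,
            2 * (CN * ((a ^ ζ₁ k * b ^ ζ₂ k + 1) * (a ^ δ₁ k * b ^ δ₂ k)) * b) := by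
          rw [Finset.mul_sum, Finset.sum_mul, Finset.mul_sum]
      _ = ∑ k : Fin n,
            (2 * CN * (a ^ (ζ₁ k + δ₁ k) * b ^ (ζ₂ k + δ₂ k + 1))
              + 2 * CN * (a ^ δ₁ k * b ^ (δ₂ k + 1))) :=
          Finset.sum_congr rfl fun k _ => hexp k
      _ ≤ ∑ k : Fin n,
            ((ε * b ^ (2:ℝ) + C1 k * a ^ (2 * (ζ₁ k + δ₁ k) / (2 - (ζ₂ k + δ₂ k + 1))))
              + (ε * b ^ (2:ℝ) + C2 k * a ^ (2 * (δ₁ k) / (2 - (δ₂ k + 1))))) :=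
          Finset.sum_le_sum fun k _ =>
            add_le_add (hC1' k a b ha hb) (hC2' k a b ha hb)
      _ ≤ ∑ k : Fin n,
            ((ε * b ^ (2:ℝ) + C1 k * A) + (ε * b ^ (2:ℝ) + C2 k * A)) := by
          refine Finset.sum_le_sum fun k _ => add_le_add
            (add_le_add_right (mul_le_mul_of_nonneg_left ?_ (hC1 k)) _)
            (add_le_add_right (mul_le_mul_of_nonneg_left ?_ (hC2 k)) _)
          · exact absorb_aux p _ a (hq1two k) ((hple k).1) ha
          · exact absorb_aux p _ a (hq2two k) ((hple k).2) ha
      _ = (n:ℝ) * (2 * (ε * b ^ (2:ℝ))) + (∑ k : Fin n, (C1 k + C2 k)) * A := by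
          simp only [Finset.sum_add_distrib, Finset.sum_const, Finset.card_univ,
            Fintype.card_fin, nsmul_eq_mul, ← Finset.sum_mul]
          ring
  have heps : (n:ℝ) * (2 * (ε * b ^ (2:ℝ))) = γ / 2 * b ^ (2:ℝ) := by
    rw [hεdef]; field_simp; ring
  have hb2nn : (0:ℝ) ≤ b ^ (2:ℝ) := Real.rpow_nonneg hb _
  have hfin : (n:ℝ) * (2 * (ε * b ^ (2:ℝ))) ≤ γ * b ^ (2:ℝ) := by
    rw [heps]
    exact mul_le_mul_of_nonneg_right (by linarith) hb2nn
  have : 2 * (N y) y ≤ γ * b ^ (2:ℝ) + (∑ k : Fin n, (C1 k + C2 k)) * A := by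
    linarith
  rw [hb2eq, hAdef, ha2eq] at this
  calc 2 * (N y) y ≤ γ * b ^ (2:ℕ) + (∑ k : Fin n, (C1 k + C2 k)) * ((1 + a ^ p) * a ^ (2:ℕ)) := this
    _ = γ * ‖y‖ ^ 2 + (∑ k : Fin n, (C1 k + C2 k)) * (1 + ‖ι y‖ ^ p) * ‖ι y‖ ^ 2 := by
        rw [hadef, hbdef]; ring
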